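/- Let H be a bialgebra over a commutative ring k, R ∈ H ⊗ H an invertible element satisfying (id ⊗ Δ)(R) = R₁₃R₁₂ and (Δ̃ ⊗ id)(R) = R₂₃R₁₃, where Δ̃: H → H ⊗ H is a k-linear algebra map with (ε ⊗ id)∘Δ̃ = id = (id ⊗ ε)∘Δ̃, and suppose Δ̃(h)·R = R·Δ(h) for all h ∈ H. Then Δ̃ is coassociative: (Δ̃ ⊗ id)∘Δ̃ = (id ⊗ Δ̃)∘Δ̃. -/

import Mathlib

open TensorProduct

variable (k : Type*) [CommRing k] (H : Type*) [Ring H] [Bialgebra k H]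

/-- `R ⊗ 1` in `H ⊗ H ⊗ H`. -/
noncomputable def leg12 : H ⊗[k] H →ₐ[k] H ⊗[k] (H ⊗[k] H) :=
  Algebra.TensorProduct.map (AlgHom.id k H) Algebra.TensorProduct.includeLeft

/-- `R` with legs in factors 1 and 3. -/
noncomputable def leg13 : H ⊗[k] H →ₐ[k] H ⊗[k] (H ⊗[k] H) :=
  Algebra.TensorProduct.map (AlgHom.id k H) Algebra.TensorProduct.includeRight

/-- `1 ⊗ R` in `H ⊗ H ⊗ H`. -/
noncomputable def leg23 : H ⊗[k] H →ₐ[k] H ⊗[k] (H ⊗[k] H) :=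
  Algebra.TensorProduct.includeRight

/-- `id ⊗ Δ`. -/
noncomputable def idComul : H ⊗[k] H →ₐ[k] H ⊗[k] (H ⊗[k] H) :=
  Algebra.TensorProduct.map (AlgHom.id k H) (Bialgebra.comulAlgHom k H)

/-- `Δ ⊗ id` (landing in `H ⊗ (H ⊗ H)` via the associator). -/
noncomputable def comulId : H ⊗[k] H →ₐ[k] H ⊗[k] (H ⊗[k] H) :=
  (Algebra.TensorProduct.assoc k k k H H H).toAlgHom.comp
    (Algebra.TensorProduct.map (Bialgebra.comulAlgHom k H) (AlgHom.id k H))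

/-- The opposite comultiplication `Δᵒᵖ = τ ∘ Δ`. -/
noncomputable def comulOp : H →ₐ[k] H ⊗[k] H :=
  (Algebra.TensorProduct.comm k H H).toAlgHom.comp (Bialgebra.comulAlgHom k H)

set_option maxHeartbeats 2000000 in
/-- a second counital algebra-map comultiplication intertwined with `Δ`
by an invertible `R` satisfying the mixed R-matrix axioms is coassociative. -/
theorem stmt9 (Δt : H →ₐ[k] H ⊗[k] H)
    (hcounit₁ : ∀ h : H,
      (Algebra.TensorProduct.lid k H)
        ((Algebra.TensorProduct.map (Bialgebra.counitAlgHom k H) (AlgHom.id k H)) (Δt h)) = h)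
    (hcounit₂ : ∀ h : H,
      (Algebra.TensorProduct.rid k k H)
        ((Algebra.TensorProduct.map (AlgHom.id k H) (Bialgebra.counitAlgHom k H)) (Δt h)) = h)
    (R R' : H ⊗[k] H)
    (hinv₁ : R * R' = 1) (hinv₂ : R' * R = 1)
    (hR₁ : idComul k H R = leg13 k H R * leg12 k H R)
    (hR₂ : ((Algebra.TensorProduct.assoc k k k H H H).toAlgHom.comp
        (Algebra.TensorProduct.map Δt (AlgHom.id k H))) R = leg23 k H R * leg13 k H R)
    (hR₃ : ∀ h : H, Δt h * R = R * Bialgebra.comulAlgHom k H h) :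
    ∀ h : H,
      (Algebra.TensorProduct.assoc k k k H H H)
          ((Algebra.TensorProduct.map Δt (AlgHom.id k H)) (Δt h)) =
        (Algebra.TensorProduct.map (AlgHom.id k H) Δt) (Δt h) := by

  intro h
  -- Notation
  set C := Bialgebra.comulAlgHom k H with hC
  -- Δt h = R * Δ h * R'
  have hΔt : ∀ x : H, Δt x = R * C x * R' := by
    intro x
    have h1 : Δt x * (R * R') = R * C x * R' := by
      rw [← mul_assoc, hR₃, mul_assoc]
    rwa [hinv₁, mul_one] at h1
  -- The two twisted coproduct maps on H ⊗ H
  set Dt12 : H ⊗[k] H →ₐ[k] H ⊗[k] (H ⊗[k] H) :=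
    (Algebra.TensorProduct.assoc k k k H H H).toAlgHom.comp
      (Algebra.TensorProduct.map Δt (AlgHom.id k H)) with hDt12
  set Dt23 : H ⊗[k] H →ₐ[k] H ⊗[k] (H ⊗[k] H) :=
    Algebra.TensorProduct.map (AlgHom.id k H) Δt with hDt23
  -- assoc ∘ includeLeft = leg12
  have key12 : ∀ x : H ⊗[k] H,
      (Algebra.TensorProduct.assoc k k k H H H)
        ((Algebra.TensorProduct.includeLeft :
            H ⊗[k] H →ₐ[k] (H ⊗[k] H) ⊗[k] H) x) = leg12 k H x := by
    intro x
    induction x using TensorProduct.induction_on with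
    | zero => simp
    | tmul a b =>
        simp [leg12, Algebra.TensorProduct.includeLeft_apply,
          Algebra.TensorProduct.assoc_tmul]
    | add x y hx hy => simp only [map_add, hx, hy]
  -- Dt12 x = leg12 R * comulId x * leg12 R'
  have L12 : ∀ x : H ⊗[k] H,
      Dt12 x = leg12 k H R * comulId k H x * leg12 k H R' := by
    intro x
    induction x using TensorProduct.induction_on with
    | zero => simp
    | tmul a b =>
        have : Dt12 (a ⊗ₜ[k] b)
            = (Algebra.TensorProduct.assoc k k k H H H)
                ((R ⊗ₜ[k] (1 : H)) * ((C a) ⊗ₜ[k] b) * (R' ⊗ₜ[k] (1 : H))) := by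
          simp only [hDt12, AlgHom.coe_comp, Function.comp_apply,
            Algebra.TensorProduct.map_tmul, AlgHom.coe_id, id_eq, hΔt,
            Algebra.TensorProduct.tmul_mul_tmul, mul_one, one_mul,
            AlgEquiv.toAlgHom_eq_coe, AlgHom.coe_coe]
          rfl
        rw [this, map_mul, map_mul]
        have e1 : (Algebra.TensorProduct.assoc k k k H H H) (R ⊗ₜ[k] (1 : H))
            = leg12 k H R := key12 R
        have e2 : (Algebra.TensorProduct.assoc k k k H H H) (R' ⊗ₜ[k] (1 : H))
            = leg12 k H R' := key12 R'
        have e3 : comulId k H (a ⊗ₜ[k] b)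
            = (Algebra.TensorProduct.assoc k k k H H H) ((C a) ⊗ₜ[k] b) := by
          simp [comulId, hC, Bialgebra.comulAlgHom_apply]
        rw [e1, e2, e3]
    | add x y hx hy =>
        simp only [map_add, hx, hy, mul_add, add_mul]
  -- Dt23 x = leg23 R * idComul x * leg23 R'
  have L23 : ∀ x : H ⊗[k] H,
      Dt23 x = leg23 k H R * idComul k H x * leg23 k H R' := by
    intro x
    induction x using TensorProduct.induction_on with
    | zero => simp
    | tmul a b =>
        simp only [hDt23, Algebra.TensorProduct.map_tmul, AlgHom.coe_id, id_eq,
          hΔt, leg23, idComul, Algebra.TensorProduct.includeRight_apply,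
          Algebra.TensorProduct.tmul_mul_tmul, mul_one, one_mul, hC]
    | add x y hx hy =>
        simp only [map_add, hx, hy, mul_add, add_mul]
  -- inverses transported along algebra maps, uniqueness of inverse
  have uniq : ∀ {M : Type _} [Monoid M] (a b c : M),
      a * b = 1 → b * a = 1 → a * c = 1 → b = c := by
    intro M _ a b c h1 h2 h3
    calc b = b * (a * c) := by rw [h3, mul_one]
    _ = (b * a) * c := by rw [mul_assoc]
    _ = c := by rw [h2, one_mul]
  -- Dt12 R' = leg13 R' * leg23 R'
  have hDt12R' : Dt12 R' = leg13 k H R' * leg23 k H R' := by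
    refine uniq (Dt12 R) _ _ ?_ ?_ ?_
    · rw [← map_mul, hinv₁, map_one]
    · rw [← map_mul, hinv₂, map_one]
    · rw [hR₂]
      calc leg23 k H R * leg13 k H R * (leg13 k H R' * leg23 k H R')
          = leg23 k H R * (leg13 k H R * leg13 k H R') * leg23 k H R' := by
            simp only [mul_assoc]
        _ = 1 := by rw [← map_mul, hinv₁, map_one, mul_one, ← map_mul, hinv₁, map_one]
  -- idComul R' = leg12 R' * leg13 R'
  have hIcR' : idComul k H R' = leg12 k H R' * leg13 k H R' := by
    refine uniq (idComul k H R) _ _ ?_ ?_ ?_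
    · rw [← map_mul, hinv₁, map_one]
    · rw [← map_mul, hinv₂, map_one]
    · rw [hR₁]
      calc leg13 k H R * leg12 k H R * (leg12 k H R' * leg13 k H R')
          = leg13 k H R * (leg12 k H R * leg12 k H R') * leg13 k H R' := by
            simp only [mul_assoc]
        _ = 1 := by rw [← map_mul, hinv₁, map_one, mul_one, ← map_mul, hinv₁, map_one]
  -- coassociativity of Δ in our notation
  have coas : comulId k H (C h) = idComul k H (C h) := by
    have h0 := Coalgebra.coassoc_apply (R := k) (A := H) h
    have e12 : ∀ y : H ⊗[k] (H ⊗[k] H), True := fun _ => trivial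
    -- translate
    simp only [comulId, idComul, AlgEquiv.toAlgHom_eq_coe, AlgHom.coe_comp,
      AlgHom.coe_coe, Function.comp_apply]
    have hr : (Algebra.TensorProduct.map C (AlgHom.id k H)) (C h)
        = (Coalgebra.comul (R := k)).rTensor H (Coalgebra.comul h) := by
      have : C h = Coalgebra.comul (R := k) h := rfl
      rw [this]
      induction (Coalgebra.comul (R := k) (A := H) h) using
        TensorProduct.induction_on with
      | zero => simp
      | tmul a b => simp [LinearMap.rTensor_tmul]; rfl
      | add x y hx hy => simp only [map_add, hx, hy]
    have hl : (Algebra.TensorProduct.map (AlgHom.id k H) C) (C h)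
        = (Coalgebra.comul (R := k)).lTensor H (Coalgebra.comul h) := by
      have : C h = Coalgebra.comul (R := k) h := rfl
      rw [this]
      induction (Coalgebra.comul (R := k) (A := H) h) using
        TensorProduct.induction_on with
      | zero => simp
      | tmul a b => simp [LinearMap.lTensor_tmul]; rfl
      | add x y hx hy => simp only [map_add, hx, hy]
    have hassoc : ∀ y : (H ⊗[k] H) ⊗[k] H,
        (Algebra.TensorProduct.assoc k k k H H H) y = (TensorProduct.assoc k H H H) y := by
      intro y
      induction y using TensorProduct.induction_on with
      | zero => simp
      | tmul ab c =>
          induction ab using TensorProduct.induction_on with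
          | zero => simp [TensorProduct.zero_tmul]
          | tmul a b => simp [Algebra.TensorProduct.assoc_tmul]
          | add x y hx hy => simp only [TensorProduct.add_tmul, map_add, hx, hy]
      | add x y hx hy => simp only [map_add, hx, hy]
    rw [hr, hl]
    exact (hassoc _).trans h0
  -- cancellation lemma for leg23
  have cancel23 : ∀ x : H ⊗[k] (H ⊗[k] H),
      leg23 k H R' * (leg23 k H R * x) = x := by
    intro x
    rw [← mul_assoc, ← map_mul, hinv₂, map_one, one_mul]
  -- Now the main computation
  have goal12 : (Algebra.TensorProduct.assoc k k k H H H)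
      ((Algebra.TensorProduct.map Δt (AlgHom.id k H)) (Δt h)) = Dt12 (Δt h) := rfl
  have goal23 : (Algebra.TensorProduct.map (AlgHom.id k H) Δt) (Δt h)
      = Dt23 (Δt h) := rfl
  rw [goal12, goal23, hΔt h, map_mul, map_mul, map_mul, map_mul,
    hR₂, hDt12R', L12 (C h), L23 R, L23 (C h), L23 R', hR₁, hIcR', coas]
  simp only [mul_assoc, cancel23]
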